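/- Let P be a complex polynomial with n distinct roots α₁,…,αₙ, and let z ∈ ℂ with P'(z) ≠ 0. Then there exists a root α of P such that |z − α| ≤ n·|P(z)/P'(z)|. -/

import Mathlib

open Polynomial


private lemma derivative_finset_prod {ι : Type*} [DecidableEq ι] (s : Finset ι)
    (f : ι → Polynomial ℂ) :
    derivative (∏ i ∈ s, f i) = ∑ i ∈ s, (∏ j ∈ s.erase i, f j) * derivative (f i) := by
  induction s using Finset.induction with
  | empty => simp
  | @insert a s ha ih =>
    have hsum : ∑ i ∈ s, (∏ j ∈ (insert a s).erase i, f j) * derivative (f i)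
        = ∑ i ∈ s, f a * ((∏ j ∈ s.erase i, f j) * derivative (f i)) := by
      refine Finset.sum_congr rfl fun i hi => ?_
      rw [Finset.erase_insert_of_ne (ne_of_mem_of_not_mem hi ha).symm,
        Finset.prod_insert (fun h => ha (Finset.mem_of_mem_erase h))]
      ring
    rw [Finset.prod_insert ha, derivative_mul, ih, Finset.sum_insert ha,
      Finset.erase_insert ha, hsum, ← Finset.mul_sum]
    ring

/-- If P ∈ ℂ[X] has n distinct roots α₁,…,αₙ (i.e. P = c·∏(X - αᵢ) with c ≠ 0
and the αᵢ distinct) and z ∈ ℂ satisfies P'(z) ≠ 0, then some root α satisfies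
|z - α| ≤ n·|P(z)/P'(z)|. -/
theorem newton_root_bound (n : ℕ) (c : ℂ) (hc : c ≠ 0) (α : Fin n → ℂ)
    (hα : Function.Injective α) (P : Polynomial ℂ)
    (hP : P = C c * ∏ i, (X - C (α i))) (z : ℂ)
    (hz : (derivative P).eval z ≠ 0) :
    ∃ i : Fin n,
      ‖z - α i‖ ≤ n * ‖P.eval z / (derivative P).eval z‖ := by
  subst hP
  have hn : 0 < n := by
    rcases Nat.eq_zero_or_pos n with h | h
    · subst h; simp at hz
    · exact h
  by_cases hPz : ((C c * ∏ i, (X - C (α i))).eval z) = 0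
  · -- z is itself a root
    simp only [eval_mul, eval_C, eval_prod, eval_sub, eval_X, mul_eq_zero, hc,
      false_or, Finset.prod_eq_zero_iff] at hPz
    obtain ⟨i, -, hi⟩ := hPz
    refine ⟨i, ?_⟩
    rw [sub_eq_zero] at hi
    rw [hi]
    simp only [sub_self, norm_zero]
    positivity
  · obtain ⟨i₀, -, hi₀⟩ := Finset.exists_min_image Finset.univ
      (fun i => ‖z - α i‖) ⟨⟨0, hn⟩, Finset.mem_univ _⟩
    refine ⟨i₀, ?_⟩
    set m := ‖z - α i₀‖ with hm
    have hPzval : (C c * ∏ i, (X - C (α i))).eval z = c * ∏ i, (z - α i) := by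
      simp [eval_prod]
    have hprodne : ∀ i : Fin n, z - α i ≠ 0 := by
      intro i h
      apply hPz
      rw [hPzval]
      exact mul_eq_zero_of_right _ (Finset.prod_eq_zero (Finset.mem_univ i) h)
    have hmpos : 0 < m := by
      rw [hm]
      exact norm_pos_iff.mpr (hprodne i₀)
    -- derivative evaluation
    have hder : (derivative (C c * ∏ i, (X - C (α i)))).eval z
        = c * ∑ i : Fin n, ∏ j ∈ Finset.univ.erase i, (z - α j) := by
      rw [derivative_mul, derivative_C, zero_mul, zero_add, derivative_finset_prod]
      simp [eval_finset_sum, eval_prod]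
    -- bound each term
    have hterm : ∀ i : Fin n,
        ‖∏ j ∈ Finset.univ.erase i, (z - α j)‖
          ≤ ‖∏ j, (z - α j)‖ / m := by
      intro i
      have h1 : (∏ j ∈ Finset.univ.erase i, ‖z - α j‖) * ‖z - α i‖
          = ∏ j, ‖z - α j‖ := by
        rw [mul_comm]
        exact Finset.mul_prod_erase Finset.univ (fun j => ‖z - α j‖)
          (Finset.mem_univ i)
      rw [norm_prod, norm_prod, le_div_iff₀ hmpos, ← h1]
      exact mul_le_mul_of_nonneg_left (hi₀ i (Finset.mem_univ i))
        (Finset.prod_nonneg fun j _ => norm_nonneg _)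
    have hderle : ‖(derivative (C c * ∏ i, (X - C (α i)))).eval z‖
        ≤ n * ‖(C c * ∏ i, (X - C (α i))).eval z‖ / m := by
      rw [hder, hPzval, norm_mul, norm_mul]
      calc ‖c‖ * ‖∑ i : Fin n, ∏ j ∈ Finset.univ.erase i, (z - α j)‖
          ≤ ‖c‖ * ∑ i : Fin n,
              ‖∏ j ∈ Finset.univ.erase i, (z - α j)‖ := by
            gcongr
            exact norm_sum_le _ _
        _ ≤ ‖c‖ * ∑ i : Fin n, ‖∏ j, (z - α j)‖ / m := by
            gcongr with i
            exact hterm i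
        _ = n * (‖c‖ * ‖∏ j, (z - α j)‖) / m := by
            rw [Finset.sum_const, Finset.card_univ, Fintype.card_fin]
            ring
    rw [norm_div]
    rw [le_div_iff₀ hmpos] at hderle
    have habsder : 0 < ‖(derivative (C c * ∏ i, (X - C (α i)))).eval z‖ :=
      norm_pos_iff.mpr hz
    rw [← mul_div_assoc, le_div_iff₀ habsder]
    calc m * ‖(derivative (C c * ∏ i, (X - C (α i)))).eval z‖
        = ‖(derivative (C c * ∏ i, (X - C (α i)))).eval z‖ * m := mul_comm _ _
      _ ≤ n * ‖(C c * ∏ i, (X - C (α i))).eval z‖ := hderle
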